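/- The set F of pruned binary trees T ⊆ List Bool such that every branch of T contains only finitely many 1s is a complete co-analytic subset of the standard Borel space of pruned binary trees. -/

import Mathlib

/-- A set-theoretic binary tree: a nonempty subset of `List Bool`
closed under taking initial segments. -/
def IsSTTree (T : Set (List Bool)) : Prop :=
  T.Nonempty ∧ ∀ s ∈ T, ∀ t : List Bool, t <+: s → t ∈ T

/-- A tree is pruned if every vertex has at least one child. -/
def IsPruned (T : Set (List Bool)) : Prop :=
  ∀ s ∈ T, s ++ [false] ∈ T ∨ s ++ [true] ∈ T

/-- The initial segment of length `n` of an infinite binary sequence. -/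
def pref (β : ℕ → Bool) (n : ℕ) : List Bool := List.ofFn (fun i : Fin n => β i)

/-- `β` is a branch of `T`: all its finite initial segments lie in `T`. -/
def IsBranch (T : Set (List Bool)) (β : ℕ → Bool) : Prop := ∀ n, pref β n ∈ T

/-- `β` contains infinitely many 1s. -/
def InfManyOnes (β : ℕ → Bool) : Prop := ∀ N, ∃ n ≥ N, β n = true

/-- A Σ-coloring of a binary tree `T`:
(Σ1) the root gets color ≥ 1;
(Σ2) if `f s = 1` then the right child `s⌢1` is in `T` with color ≥ 1;
(Σ3) if `f s ≥ 2` then the left child `s⌢0` is in `T` with color `f s - 1`. -/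
def SigmaColoring (T : Set (List Bool)) (f : List Bool → ℕ) : Prop :=
  1 ≤ f [] ∧
  (∀ s ∈ T, f s = 1 → s ++ [true] ∈ T ∧ 1 ≤ f (s ++ [true])) ∧
  (∀ s ∈ T, 2 ≤ f s → s ++ [false] ∈ T ∧ f (s ++ [false]) = f s - 1)

/-- The subset of `List Bool` coded by a characteristic function. -/
def treeSet (T : List Bool → Bool) : Set (List Bool) := {s | T s = true}

/-- The space of (codes of) pruned set-theoretic binary trees,
as a subset of the Polish space `2^(List Bool)`. -/
def PTr2 : Set (List Bool → Bool) :=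
  {T | IsSTTree (treeSet T) ∧ IsPruned (treeSet T)}

/-- The set `F` of pruned binary trees all of whose branches contain
only finitely many 1s. -/
def Fset : Set (List Bool → Bool) :=
  {T | T ∈ PTr2 ∧ ∀ β : ℕ → Bool, IsBranch (treeSet T) β → ∃ N, ∀ n ≥ N, β n = false}



-- basic measurable sets
lemma measE (s : List Bool) : MeasurableSet {T : List Bool → Bool | T s = true} := by
  have h : {T : List Bool → Bool | T s = true} =
      (fun T : List Bool → Bool => T s) ⁻¹' {true} := rfl
  rw [h]; exact (measurable_pi_apply s) (measurableSet_singleton true)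

lemma measPTr2 : MeasurableSet PTr2 := by
  have h1 : PTr2 = ({T : List Bool → Bool | ∃ s, T s = true} ∩
      (⋂ (s : List Bool), ⋂ (t : List Bool), ⋂ (_ : t <+: s),
        {T : List Bool → Bool | T s = true}ᶜ ∪ {T | T t = true}) ∩
      (⋂ (s : List Bool), {T : List Bool → Bool | T s = true}ᶜ ∪
        ({T | T (s ++ [false]) = true} ∪ {T | T (s ++ [true]) = true}))) := by
    ext T
    simp only [PTr2, IsSTTree, IsPruned, treeSet, Set.Nonempty, Set.mem_setOf_eq,
      Set.mem_inter_iff, Set.mem_iInter, Set.mem_union, Set.mem_compl_iff]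
    constructor
    · rintro ⟨⟨⟨s, hs⟩, hcl⟩, hpr⟩
      refine ⟨⟨⟨s, hs⟩, ?_⟩, ?_⟩
      · intro s t ht
        by_cases h : T s = true
        · exact Or.inr (hcl s h t ht)
        · exact Or.inl h
      · intro s
        by_cases h : T s = true
        · exact Or.inr (hpr s h)
        · exact Or.inl h
    · rintro ⟨⟨⟨s, hs⟩, hcl⟩, hpr⟩
      refine ⟨⟨⟨s, hs⟩, ?_⟩, ?_⟩
      · intro s hsT t ht
        rcases hcl s t ht with h | h
        · exact absurd hsT h
        · exact h
      · intro s hsT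
        rcases hpr s with h | h
        · exact absurd hsT h
        · exact h
  rw [h1]
  refine (MeasurableSet.inter (MeasurableSet.inter ?_ ?_) ?_)
  · have : {T : List Bool → Bool | ∃ s, T s = true} = ⋃ s, {T | T s = true} := by
      ext T; simp
    rw [this]; exact MeasurableSet.iUnion fun s => measE s
  · exact MeasurableSet.iInter fun s => MeasurableSet.iInter fun t =>
      MeasurableSet.iInter fun _ => ((measE s).compl.union (measE t))
  · exact MeasurableSet.iInter fun s =>
      ((measE s).compl.union ((measE (s ++ [false])).union (measE (s ++ [true]))))

lemma measPref (n : ℕ) (w : List Bool) : MeasurableSet {β : ℕ → Bool | pref β n = w} := by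
  by_cases hl : w.length = n
  · have : {β : ℕ → Bool | pref β n = w} =
        ⋂ (i : ℕ), ⋂ (_ : i < n), {β : ℕ → Bool | β i = w.getD i true} := by
      ext β
      simp only [Set.mem_setOf_eq, Set.mem_iInter]
      constructor
      · intro h i hi
        rw [← h]
        have hi' : i < (pref β n).length := by simp [pref, hi]
        rw [List.getD_eq_getElem _ _ hi']
        simp [pref]
      · intro h
        apply List.ext_getElem (by simp [pref, hl])
        intro i h1 h2
        have hi : i < n := by simpa [pref] using h1
        have := h i hi
        rw [List.getD_eq_getElem _ _ (by omega : i < w.length)] at this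
        simp [pref, ← this]
    rw [this]
    exact MeasurableSet.iInter fun i => MeasurableSet.iInter fun _ =>
      (measurable_pi_apply i) (measurableSet_singleton _)
  · have : {β : ℕ → Bool | pref β n = w} = ∅ := by
      ext β
      simp only [Set.mem_setOf_eq, Set.mem_empty_iff_false, iff_false]
      intro h
      apply hl
      rw [← h]
      simp [pref]
    rw [this]; exact MeasurableSet.empty

lemma part1 : MeasureTheory.AnalyticSet (PTr2 \ Fset) := by
  classical
  set S : Set ((List Bool → Bool) × (ℕ → Bool)) :=
    {p | p.1 ∈ PTr2 ∧ IsBranch (treeSet p.1) p.2 ∧ InfManyOnes p.2} with hS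
  have hmeas : MeasurableSet S := by
    have h1 : S = (Prod.fst ⁻¹' PTr2) ∩
        (⋂ (n : ℕ), ⋃ (w : List Bool),
          ({T : List Bool → Bool | T w = true} ×ˢ {β : ℕ → Bool | pref β n = w})) ∩
        (Prod.snd ⁻¹' {β | InfManyOnes β}) := by
      ext ⟨T, β⟩
      simp only [hS, Set.mem_setOf_eq, Set.mem_inter_iff, Set.mem_preimage, Set.mem_iInter,
        Set.mem_iUnion, Set.mem_prod, IsBranch, treeSet]
      constructor
      · rintro ⟨h1, h2, h3⟩
        exact ⟨⟨h1, fun n => ⟨pref β n, h2 n, rfl⟩⟩, h3⟩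
      · rintro ⟨⟨h1, h2⟩, h3⟩
        refine ⟨h1, fun n => ?_, h3⟩
        obtain ⟨w, hw1, hw2⟩ := h2 n
        rwa [hw2]
    rw [h1]
    refine MeasurableSet.inter (MeasurableSet.inter ?_ ?_) ?_
    · exact measurable_fst measPTr2
    · exact MeasurableSet.iInter fun n => MeasurableSet.iUnion fun w =>
        (measE w).prod (measPref n w)
    · refine measurable_snd ?_
      have : {β : ℕ → Bool | InfManyOnes β} =
          ⋂ (N : ℕ), ⋃ (n : ℕ), ⋃ (_ : n ≥ N), {β : ℕ → Bool | β n = true} := by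
        ext β; simp [InfManyOnes]
      rw [this]
      exact MeasurableSet.iInter fun N => MeasurableSet.iUnion fun n =>
        MeasurableSet.iUnion fun _ => (measurable_pi_apply n) (measurableSet_singleton _)
  have himg : PTr2 \ Fset = Prod.fst '' S := by
    ext T
    simp only [Set.mem_diff, Set.mem_image, hS, Set.mem_setOf_eq, Prod.exists]
    constructor
    · rintro ⟨h1, h2⟩
      have h2' : ¬ ∀ β : ℕ → Bool, IsBranch (treeSet T) β → ∃ N, ∀ n ≥ N, β n = false :=
        fun h => h2 ⟨h1, h⟩
      push_neg at h2'
      obtain ⟨β, hb, hn⟩ := h2'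
      refine ⟨T, β, ⟨h1, hb, fun N => ?_⟩, rfl⟩
      obtain ⟨n, hn1, hn2⟩ := hn N
      exact ⟨n, hn1, by simpa using hn2⟩
    · rintro ⟨T', β, ⟨h1, h2, h3⟩, rfl⟩
      refine ⟨h1, fun hF => ?_⟩
      obtain ⟨N, hN⟩ := hF.2 β h2
      obtain ⟨n, hn1, hn2⟩ := h3 N
      rw [hN n hn1] at hn2
      exact Bool.false_ne_true hn2
  rw [himg]
  exact hmeas.analyticSet_image measurable_fst


/-! ### run-length decoding of binary strings into sequences of naturals -/

def dec : List Bool → ℕ → List ℕ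
  | [], _ => []
  | (false :: rest) , a => dec rest (a+1)
  | (true :: rest), a => a :: dec rest 0

def runlen : List Bool → ℕ → ℕ
  | [], a => a
  | (false :: rest), a => runlen rest (a+1)
  | (true :: rest), _ => runlen rest 0

lemma dec_append_false (s : List Bool) : ∀ a, dec (s ++ [false]) a = dec s a := by
  induction s with
  | nil => intro a; rfl
  | cons b t ih => intro a; cases b <;> simp [dec, ih]

lemma dec_append_true (s : List Bool) : ∀ a, dec (s ++ [true]) a = dec s a ++ [runlen s a] := by
  induction s with
  | nil => intro a; rfl
  | cons b t ih => intro a; cases b <;> simp [dec, runlen, ih]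

lemma dec_prefix {t s : List Bool} (h : t <+: s) : dec t 0 <+: dec s 0 := by
  induction s using List.reverseRecOn with
  | nil => rw [List.prefix_nil] at h; subst h; exact List.prefix_refl _
  | append_singleton s b ih =>
      rcases List.prefix_concat_iff.1 h with h' | h'
      · subst h'; exact List.prefix_refl _
      · cases b
        · rw [dec_append_false]; exact ih h'
        · rw [dec_append_true]; exact (ih h').trans (List.prefix_append _ _)

lemma dec_append_replicate (a : ℕ) : ∀ (s : List Bool) (c : ℕ),
    dec (s ++ List.replicate a false) c = dec s c := by
  induction a with
  | zero => intro s c; simp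
  | succ a ih =>
      intro s c
      have : s ++ List.replicate (a+1) false = (s ++ [false]) ++ List.replicate a false := by
        simp [List.replicate_succ]
      rw [this, ih, dec_append_false]

lemma runlen_append_replicate (a : ℕ) : ∀ (s : List Bool) (c : ℕ),
    runlen (s ++ List.replicate a false) c = runlen s c + a := by
  induction a with
  | zero => intro s c; simp [runlen]
  | succ a ih =>
      intro s c
      have : s ++ List.replicate (a+1) false = (s ++ [false]) ++ List.replicate a false := by
        simp [List.replicate_succ]
      rw [this, ih]
      have h2 : ∀ (t : List Bool) (c : ℕ), runlen (t ++ [false]) c = runlen t c + 1 := by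
        intro t
        induction t with
        | nil => intro c; rfl
        | cons b u ih2 => intro c; cases b <;> simp [runlen, ih2]
      rw [h2]; omega

lemma runlen_append_true (s : List Bool) : ∀ a, runlen (s ++ [true]) a = 0 := by
  induction s with
  | nil => intro a; rfl
  | cons b t ih => intro a; cases b <;> simp [runlen, ih]

/-! ### the tree associated to a predicate on `List ℕ` -/

open Classical in
noncomputable def gtree (Q : List ℕ → Prop) : List Bool → Bool :=
  fun s => if Q (dec s 0) then true else false

lemma mem_gtree (Q : List ℕ → Prop) (s : List Bool) :
    s ∈ treeSet (gtree Q) ↔ Q (dec s 0) := by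
  by_cases h : Q (dec s 0) <;> simp [treeSet, gtree, h]

lemma gtree_mem_PTr2 {Q : List ℕ → Prop} (hnil : Q [])
    (hmono : ∀ u v : List ℕ, u <+: v → Q v → Q u) : gtree Q ∈ PTr2 := by
  refine ⟨⟨⟨[], (mem_gtree Q []).2 hnil⟩, ?_⟩, ?_⟩
  · intro s hs t ht
    exact (mem_gtree Q t).2 (hmono _ _ (dec_prefix ht) ((mem_gtree Q s).1 hs))
  · intro s hs
    left
    rw [mem_gtree, dec_append_false]
    exact (mem_gtree Q s).1 hs

/-- the prefix words coding `x` -/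
def wrd (x : ℕ → ℕ) : ℕ → List Bool
  | 0 => []
  | (k+1) => wrd x k ++ List.replicate (x k) false ++ [true]

lemma wrd_prefix (x : ℕ → ℕ) {k m : ℕ} (h : k ≤ m) : wrd x k <+: wrd x m := by
  induction m with
  | zero => rw [Nat.le_zero.1 h]
  | succ m ih =>
      rcases Nat.lt_or_ge k (m+1) with h' | h'
      · refine (ih (Nat.lt_succ_iff.1 h')).trans ?_
        show wrd x m <+: wrd x m ++ List.replicate (x m) false ++ [true]
        rw [List.append_assoc]; exact List.prefix_append _ _
      · have : k = m + 1 := le_antisymm h h'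
        rw [this]

lemma wrd_length (x : ℕ → ℕ) (k : ℕ) : k ≤ (wrd x k).length := by
  induction k with
  | zero => simp [wrd]
  | succ k ih => simp [wrd]; omega

lemma dec_wrd (x : ℕ → ℕ) (k : ℕ) :
    dec (wrd x k) 0 = List.ofFn (fun i : Fin k => x i) ∧ runlen (wrd x k) 0 = 0 := by
  induction k with
  | zero => exact ⟨rfl, rfl⟩
  | succ k ih =>
      constructor
      · show dec (wrd x k ++ List.replicate (x k) false ++ [true]) 0 = _
        rw [dec_append_true, dec_append_replicate, runlen_append_replicate, ih.1, ih.2,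
          List.ofFn_succ']
        simp
      · show runlen (wrd x k ++ List.replicate (x k) false ++ [true]) 0 = 0
        rw [runlen_append_true]

/-- From an infinite chain in `Q`, a branch of `gtree Q` with infinitely many ones. -/
lemma gtree_branch_of_chain {Q : List ℕ → Prop}
    (hmono : ∀ u v : List ℕ, u <+: v → Q v → Q u)
    (x : ℕ → ℕ) (hx : ∀ m, Q (List.ofFn (fun i : Fin m => x i))) :
    ∃ β : ℕ → Bool, IsBranch (treeSet (gtree Q)) β ∧ InfManyOnes β := by
  classical
  refine ⟨fun n => (wrd x (n+1)).getD n false, ?_, ?_⟩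
  · intro m
    rw [mem_gtree]
    have hpre : pref (fun n => (wrd x (n+1)).getD n false) m <+: wrd x m := by
      have hlen : m ≤ (wrd x m).length := wrd_length x m
      have : pref (fun n => (wrd x (n+1)).getD n false) m = (wrd x m).take m := by
        apply List.ext_getElem
        · simp [pref]; omega
        · intro i h1 h2
          have him : i < m := by simpa [pref] using h1
          have hiw : i < (wrd x (i+1)).length := lt_of_lt_of_le (Nat.lt_succ_self i) (wrd_length x (i+1))
          simp only [pref, List.getElem_ofFn, List.getElem_take]
          rw [List.getD_eq_getElem _ _ hiw]
          exact (wrd_prefix x (by omega : i + 1 ≤ m)).getElem hiw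
      rw [this]; exact List.take_prefix _ _
    exact hmono _ _ (dec_prefix hpre) (by rw [(dec_wrd x m).1]; exact hx m)
  · intro N
    set t : List Bool := wrd x N ++ List.replicate (x N) false with ht
    have hw : wrd x (N+1) = t ++ [true] := by simp [wrd, ht]
    have hnN : t.length ≥ N := by
      have := wrd_length x N
      simp only [ht, List.length_append, List.length_replicate]
      omega
    refine ⟨t.length, hnN, ?_⟩
    show (wrd x (t.length+1)).getD t.length false = true
    have h1 : t.length < (wrd x (N+1)).length := by simp [hw]
    have hlt : t.length < (wrd x (t.length+1)).length := by
      have := (wrd_prefix x (by omega : N + 1 ≤ t.length + 1)).length_le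
      simp only [hw, List.length_append, List.length_singleton] at this ⊢
      omega
    rw [List.getD_eq_getElem _ _ hlt,
      ← (wrd_prefix x (by omega : N + 1 ≤ t.length + 1)).getElem h1,
      List.getElem_of_eq hw h1]
    simp

/-- From a branch of `gtree Q` with infinitely many ones, an infinite chain in `Q`. -/
lemma chain_of_gtree_branch {Q : List ℕ → Prop}
    (hmono : ∀ u v : List ℕ, u <+: v → Q v → Q u)
    {β : ℕ → Bool} (hβ : IsBranch (treeSet (gtree Q)) β) (hβ1 : InfManyOnes β) :
    ∃ x : ℕ → ℕ, ∀ m, Q (List.ofFn (fun i : Fin m => x i)) := by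
  classical
  set d : ℕ → List ℕ := fun n => dec (pref β n) 0 with hd
  have hQ : ∀ n, Q (d n) := fun n => (mem_gtree Q _).1 (hβ n)
  have hstep : ∀ n, pref β (n+1) = pref β n ++ [β n] := by
    intro n
    show List.ofFn _ = _
    rw [List.ofFn_succ']
    simp [pref, List.concat_eq_append]
  have hchain : ∀ {k m : ℕ}, k ≤ m → d k <+: d m := by
    intro k m h
    exact dec_prefix (by
      have : pref β k = (pref β m).take k := by
        apply List.ext_getElem
        · simp [pref]; omega
        · intro i h1 h2
          simp [pref]
      rw [this]; exact List.take_prefix _ _)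
  have hlen : ∀ n, β n = true → (d (n+1)).length = (d n).length + 1 := by
    intro n h
    show (dec (pref β (n+1)) 0).length = _
    rw [hstep n, h, dec_append_true]
    simp
    rfl
  have hub : ∀ k, ∃ n, k < (d n).length := by
    intro k
    induction k with
    | zero =>
        obtain ⟨n, -, hn⟩ := hβ1 0
        exact ⟨n+1, by rw [hlen n hn]; omega⟩
    | succ k ih =>
        obtain ⟨n, hn⟩ := ih
        obtain ⟨n', hn', hn'2⟩ := hβ1 n
        have h1 : (d n).length ≤ (d n').length := (hchain hn').length_le
        exact ⟨n'+1, by rw [hlen n' hn'2]; omega⟩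
  have hub' := hub
  choose N hN using hub
  set x : ℕ → ℕ := fun k => (d (N k))[k]'(hN k) with hx
  have hstable : ∀ k n (h : k < (d n).length), (d n)[k] = x k := by
    intro k n h
    rcases le_total n (N k) with h' | h'
    · exact (hchain h').getElem h
    · exact ((hchain h').getElem (hN k)).symm
  refine ⟨x, fun m => ?_⟩
  obtain ⟨n, hn⟩ := hub' m
  have : List.ofFn (fun i : Fin m => x i) = (d n).take m := by
    apply List.ext_getElem
    · simp; omega
    · intro i h1 h2
      have him : i < m := by simpa using h1
      simp only [List.getElem_ofFn, List.getElem_take]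
      exact (hstable i n (by omega)).symm
  rw [this]
  exact hmono _ _ (List.take_prefix _ _) (hQ n)

/-! ### cylinders in Baire space and the limit lemma -/

def cyl (u : List ℕ) : Set (ℕ → ℕ) := {z | ∀ i, ∀ _ : i < u.length, z i = u[i]}

lemma cyl_anti {u v : List ℕ} (h : u <+: v) : cyl v ⊆ cyl u := by
  intro z hz i hi
  exact (hz i (lt_of_lt_of_le hi h.length_le)).trans (h.getElem hi).symm

lemma self_mem_cyl (x : ℕ → ℕ) (m : ℕ) : x ∈ cyl (List.ofFn fun i : Fin m => x i) := by
  intro i hi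
  simp

lemma ofFn_succ_pref (x : ℕ → ℕ) (m : ℕ) :
    (List.ofFn fun i : Fin m => x i) <+: (List.ofFn fun i : Fin (m+1) => x i) := by
  rw [List.ofFn_succ' (fun i : Fin (m+1) => x i)]
  simp only [List.concat_eq_append, Fin.coe_castSucc]
  exact List.prefix_append _ _

lemma limit_lemma {Y : Type} [TopologicalSpace Y] [PolishSpace Y] {g : (ℕ → ℕ) → Y}
    (hg : Continuous g) (x : ℕ → ℕ) (y : Y)
    (h : ∀ m : ℕ, y ∈ closure (g '' cyl (List.ofFn fun i : Fin m => x i))) : g x = y := by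
  letI := TopologicalSpace.upgradeIsCompletelyMetrizable Y
  have hz : ∀ m : ℕ, ∃ z ∈ cyl (List.ofFn fun i : Fin m => x i),
      dist y (g z) < 1/(m+1) := by
    intro m
    obtain ⟨b, ⟨z, hz1, rfl⟩, hb⟩ :=
      (Metric.mem_closure_iff).1 (h m) (1/(m+1)) (by positivity)
    exact ⟨z, hz1, hb⟩
  choose z hz1 hz2 using hz
  have hzx : Filter.Tendsto z Filter.atTop (nhds x) := by
    rw [tendsto_pi_nhds]
    intro i
    refine Filter.Tendsto.congr' ?_ (tendsto_const_nhds (x := x i))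
    filter_upwards [Filter.eventually_ge_atTop (i+1)] with m hm
    have := hz1 m i (by simpa using (by omega : i < m))
    simpa using this.symm
  have h1 : Filter.Tendsto (fun m => g (z m)) Filter.atTop (nhds (g x)) :=
    (hg.tendsto x).comp hzx
  have h2 : Filter.Tendsto (fun m => g (z m)) Filter.atTop (nhds y) := by
    rw [tendsto_iff_dist_tendsto_zero]
    refine squeeze_zero (fun m => dist_nonneg) (fun m => ?_)
      tendsto_one_div_add_atTop_nhds_zero_nat
    rw [dist_comm]
    exact (hz2 m).le
  exact tendsto_nhds_unique h1 h2

/-! ### part 2 assembly -/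

def Qy {Y : Type} [TopologicalSpace Y] (g : (ℕ → ℕ) → Y) (y : Y) (u : List ℕ) : Prop :=
  u = [] ∨ y ∈ closure (g '' cyl u)

lemma Qy_nil {Y : Type} [TopologicalSpace Y] (g : (ℕ → ℕ) → Y) (y : Y) : Qy g y [] :=
  Or.inl rfl

lemma Qy_mono {Y : Type} [TopologicalSpace Y] (g : (ℕ → ℕ) → Y) (y : Y) :
    ∀ u v : List ℕ, u <+: v → Qy g y v → Qy g y u := by
  intro u v huv hv
  by_cases hu : u = []
  · exact Or.inl hu
  · rcases hv with hv | hv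
    · subst hv
      exact absurd (List.prefix_nil.1 huv) hu
    · exact Or.inr (closure_mono (Set.image_mono (cyl_anti huv)) hv)

theorem part2 (Y : Type) [TopologicalSpace Y] [PolishSpace Y]
    [MeasurableSpace Y] [BorelSpace Y] (B : Set Y)
    (hB : MeasureTheory.AnalyticSet Bᶜ) :
    ∃ f : Y → (List Bool → Bool), Measurable f ∧ (∀ y, f y ∈ PTr2) ∧
      ∀ y, y ∈ B ↔ f y ∈ Fset := by
  classical
  rw [MeasureTheory.AnalyticSet_def] at hB
  rcases hB with hB | ⟨g, hg, hrange⟩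
  · -- `Bᶜ = ∅`, i.e. `B = univ`: use the all-zeros tree
    have hBuniv : B = Set.univ := Set.compl_empty_iff.1 hB
    have hnil : (fun u : List ℕ => u = []) [] := rfl
    have hmono : ∀ u v : List ℕ, u <+: v → v = [] → u = [] := by
      intro u v huv hv; subst hv; exact List.prefix_nil.1 huv
    refine ⟨fun _ => gtree (fun u => u = []), measurable_const,
      fun _ => gtree_mem_PTr2 hnil hmono, fun y => ?_⟩
    simp only [hBuniv, Set.mem_univ, true_iff]
    refine ⟨gtree_mem_PTr2 hnil hmono, fun β hβ => ?_⟩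
    by_contra hc
    push_neg at hc
    have hinf : InfManyOnes β := by
      intro N
      obtain ⟨n, hn1, hn2⟩ := hc N
      exact ⟨n, hn1, by simpa using hn2⟩
    obtain ⟨x, hx⟩ := chain_of_gtree_branch hmono hβ hinf
    have := hx 1
    simp [List.ofFn_succ] at this
  · -- `Bᶜ = range g`
    refine ⟨fun y => gtree (Qy g y), ?_, fun y => gtree_mem_PTr2 (Qy_nil g y) (Qy_mono g y),
      fun y => ?_⟩
    · apply measurable_pi_lambda
      intro s
      have hset : MeasurableSet {y | Qy g y (dec s 0)} := by
        by_cases hu : dec s 0 = []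
        · have h2 : {y | Qy g y (dec s 0)} = Set.univ := by
            ext y; simp [Qy, hu]
          rw [h2]; exact MeasurableSet.univ
        · have h2 : {y | Qy g y (dec s 0)} = closure (g '' cyl (dec s 0)) := by
            ext y; simp [Qy, hu]
          rw [h2]; exact isClosed_closure.measurableSet
      show Measurable fun y => if Qy g y (dec s 0) then true else false
      exact Measurable.ite hset measurable_const measurable_const
    · constructor
      · -- y ∈ B → gtree (Qy g y) ∈ Fset
        intro hy
        refine ⟨gtree_mem_PTr2 (Qy_nil g y) (Qy_mono g y), fun β hβ => ?_⟩
        by_contra hc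
        push_neg at hc
        have hinf : InfManyOnes β := by
          intro N
          obtain ⟨n, hn1, hn2⟩ := hc N
          exact ⟨n, hn1, by simpa using hn2⟩
        obtain ⟨x, hx⟩ := chain_of_gtree_branch (Qy_mono g y) hβ hinf
        have hcl : ∀ m, y ∈ closure (g '' cyl (List.ofFn fun i : Fin m => x i)) := by
          intro m
          have h1 := hx (m+1)
          have h2 : y ∈ closure (g '' cyl (List.ofFn fun i : Fin (m+1) => x i)) := by
            rcases h1 with h1 | h1
            · exact absurd h1 (by simp [List.ofFn_succ])
            · exact h1
          exact closure_mono (Set.image_mono (cyl_anti (ofFn_succ_pref x m))) h2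
        have : g x = y := limit_lemma hg x y hcl
        have : y ∈ Bᶜ := by rw [← hrange]; exact ⟨x, this⟩
        exact this hy
      · -- gtree (Qy g y) ∈ Fset → y ∈ B
        intro hF
        by_contra hy
        have : y ∈ Bᶜ := hy
        rw [← hrange] at this
        obtain ⟨x, hx⟩ := this
        have hchain : ∀ m, Qy g y (List.ofFn fun i : Fin m => x i) := by
          intro m
          exact Or.inr (subset_closure ⟨x, self_mem_cyl x m, hx⟩)
        obtain ⟨β, hβ, hinf⟩ := gtree_branch_of_chain (Qy_mono g y) x hchain
        obtain ⟨N, hN⟩ := hF.2 β hβ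
        obtain ⟨n, hn1, hn2⟩ := hinf N
        rw [hN n hn1] at hn2
        exact Bool.false_ne_true hn2

/-- `F` is complete co-analytic in the space of pruned binary trees:
it is co-analytic relative to `PTr2` (i.e. `PTr2 \ F` is analytic), and every
co-analytic subset `B` of any Polish space `Y` Borel-reduces to it, i.e. there
is a Borel map `f : Y → PTr2` with `y ∈ B ↔ f y ∈ F`. -/
theorem stmt8 :
    MeasureTheory.AnalyticSet (PTr2 \ Fset) ∧
    ∀ (Y : Type) [TopologicalSpace Y] [PolishSpace Y]
      [MeasurableSpace Y] [BorelSpace Y] (B : Set Y),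
      MeasureTheory.AnalyticSet Bᶜ →
      ∃ f : Y → (List Bool → Bool), Measurable f ∧ (∀ y, f y ∈ PTr2) ∧
        ∀ y, y ∈ B ↔ f y ∈ Fset := by
  exact ⟨part1, fun Y _ _ _ _ B hB => part2 Y B hB⟩
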